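/- Let A ∈ ℝ^{d×d} be positive definite, let M_n ∈ ℝ^{d×d'}, β > 0, and let B = {M ∈ ℝ^{d×d'} : ‖A^{1/2}(M − M_n)‖_F ≤ √β}. Let Ψ ∈ ℝ^{S×d'} (S a finite index set) satisfy ‖Ψᵀ v‖₂ ≤ C_ψ ‖v‖_∞ for all v ∈ ℝ^S, where C_ψ > 0. Let v ∈ ℝ^S with ‖v‖_∞ ≤ H for some H > 0, let φ ∈ ℝ^d, and let M̃, M* ∈ B. Then φᵀ (M̃ − M*) Ψᵀ v ≤ 2 C_ψ H √(β · φᵀ A^{-1} φ). -/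

import Mathlib

open Matrix Finset

/-- The Frobenius norm of a matrix. -/
noncomputable def frobNorm {d d' : ℕ} (Y : Matrix (Fin d) (Fin d') ℝ) : ℝ :=
  Real.sqrt (∑ i, ∑ j, (Y i j) ^ 2)

/-- The square root of a positive semidefinite matrix, as `Matrix.PosSemidef.sqrt` was defined
in the older Mathlib (removed since). -/
noncomputable def Matrix.PosSemidef.sqrt {n : Type*} [Fintype n] [DecidableEq n]
    {A : Matrix n n ℝ} (hA : A.PosSemidef) : Matrix n n ℝ :=
  hA.1.eigenvectorUnitary.1 * diagonal ((↑) ∘ (√·) ∘ hA.1.eigenvalues) *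
    (star hA.1.eigenvectorUnitary : Matrix n n ℝ)

lemma psd_sqrt_mul_self {n : Type*} [Fintype n] [DecidableEq n]
    {A : Matrix n n ℝ} (hA : A.PosSemidef) : hA.sqrt * hA.sqrt = A := by
  unfold Matrix.PosSemidef.sqrt
  have hU : (star hA.1.eigenvectorUnitary : Matrix n n ℝ) * hA.1.eigenvectorUnitary.1 = 1 :=
    Unitary.coe_star_mul_self _
  have hD : diagonal ((fun x : ℝ => x) ∘ (fun x : ℝ => √x) ∘ hA.1.eigenvalues) *
      diagonal ((fun x : ℝ => x) ∘ (fun x : ℝ => √x) ∘ hA.1.eigenvalues) =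
      diagonal ((RCLike.ofReal : ℝ → ℝ) ∘ hA.1.eigenvalues) := by
    rw [diagonal_mul_diagonal]
    congr 1
    funext i
    simp [Real.mul_self_sqrt (hA.eigenvalues_nonneg i)]
  conv_rhs => rw [hA.1.spectral_theorem]
  rw [Unitary.conjStarAlgAut_apply]
  calc _ = hA.1.eigenvectorUnitary.1 *
      diagonal ((fun x : ℝ => x) ∘ (fun x : ℝ => √x) ∘ hA.1.eigenvalues) *
      ((star hA.1.eigenvectorUnitary : Matrix n n ℝ) * hA.1.eigenvectorUnitary.1) *
      diagonal ((fun x : ℝ => x) ∘ (fun x : ℝ => √x) ∘ hA.1.eigenvalues) *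
      (star hA.1.eigenvectorUnitary : Matrix n n ℝ) := by simp only [Matrix.mul_assoc]
    _ = _ := by rw [hU, Matrix.mul_one, Matrix.mul_assoc _ (diagonal _) (diagonal _), hD]

lemma psd_sqrt_transpose {n : Type*} [Fintype n] [DecidableEq n]
    {A : Matrix n n ℝ} (hA : A.PosSemidef) : (hA.sqrt)ᵀ = hA.sqrt := by
  rw [← Matrix.conjTranspose_eq_transpose_of_trivial]
  unfold Matrix.PosSemidef.sqrt
  rw [Matrix.conjTranspose_mul, Matrix.conjTranspose_mul, Matrix.diagonal_conjTranspose,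
    ← Matrix.star_eq_conjTranspose, ← Matrix.star_eq_conjTranspose, star_star]
  simp [Matrix.mul_assoc]

lemma frobNorm_nonneg {d d' : ℕ} (Y : Matrix (Fin d) (Fin d') ℝ) : 0 ≤ frobNorm Y :=
  Real.sqrt_nonneg _

lemma frob_sub_le {d d' : ℕ} (X Y : Matrix (Fin d) (Fin d') ℝ) :
    frobNorm (X - Y) ≤ frobNorm X + frobNorm Y := by
  unfold frobNorm
  have h := norm_sub_le ((WithLp.equiv 2 (Fin d × Fin d' → ℝ)).symm (fun p => X p.1 p.2))
    ((WithLp.equiv 2 (Fin d × Fin d' → ℝ)).symm (fun p => Y p.1 p.2))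
  simpa [EuclideanSpace.norm_eq, Real.norm_eq_abs, sq_abs, Fintype.sum_prod_type] using h

lemma mv_l2_le {d d' : ℕ} (N : Matrix (Fin d) (Fin d') ℝ) (w : Fin d' → ℝ) :
    Real.sqrt (∑ i, ((N *ᵥ w) i) ^ 2) ≤ frobNorm N * Real.sqrt (∑ j, (w j) ^ 2) := by
  unfold frobNorm
  rw [← Real.sqrt_mul (by positivity)]
  apply Real.sqrt_le_sqrt
  have h : ∑ i, ((N *ᵥ w) i) ^ 2 ≤ ∑ i, (∑ j, (N i j) ^ 2) * (∑ j, (w j) ^ 2) := by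
    apply Finset.sum_le_sum
    intro i _
    simpa [Matrix.mulVec, dotProduct] using
      Finset.sum_mul_sq_le_sq_mul_sq Finset.univ (fun j => N i j) w
  rwa [← Finset.sum_mul] at h

/-- Per-step error bound under the stronger feature regularity Assumption 2′
(Frobenius-norm confidence ball): for `M̃, M*` in the ball,
`φᵀ(M̃ − M*)Ψᵀv ≤ 2 Cψ H √(β · φᵀ A⁻¹ φ)`.  The norm on `S → ℝ` is the sup
norm (Pi norm), and `‖Ψᵀv‖₂` is written explicitly as a Euclidean norm. -/
theorem per_step_error_bound_frobenius {d d' : ℕ} {S : Type*} [Fintype S]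
    (A : Matrix (Fin d) (Fin d) ℝ) (hA : A.PosDef)
    (Mn : Matrix (Fin d) (Fin d') ℝ) (β Cψ H : ℝ) (hβ : 0 < β)
    (hCψ : 0 < Cψ) (hH : 0 < H)
    (Ψ : Matrix S (Fin d') ℝ)
    (hΨ : ∀ v : S → ℝ, Real.sqrt (∑ j, ((Ψᵀ *ᵥ v) j) ^ 2) ≤ Cψ * ‖v‖)
    (v : S → ℝ) (hv : ‖v‖ ≤ H) (φ : Fin d → ℝ)
    (Mt Mstar : Matrix (Fin d) (Fin d') ℝ)
    (hMt : frobNorm (hA.posSemidef.sqrt * (Mt - Mn)) ≤ Real.sqrt β)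
    (hMstar : frobNorm (hA.posSemidef.sqrt * (Mstar - Mn)) ≤ Real.sqrt β) :
    φ ⬝ᵥ ((Mt - Mstar) *ᵥ (Ψᵀ *ᵥ v)) ≤
      2 * Cψ * H * Real.sqrt (β * (φ ⬝ᵥ (A⁻¹ *ᵥ φ))) := by
  set R := hA.posSemidef.sqrt with hRdef
  have hRR : R * R = A := psd_sqrt_mul_self hA.posSemidef
  have hRH : Rᵀ = R := psd_sqrt_transpose hA.posSemidef
  have hRdet : IsUnit R.det := by
    have hd : R.det * R.det = A.det := by rw [← Matrix.det_mul, hRR]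
    have hApos : 0 < A.det := hA.det_pos
    refine isUnit_iff_ne_zero.2 ?_
    intro h0
    rw [h0, mul_zero] at hd
    exact hApos.ne' hd.symm
  set w : Fin d' → ℝ := Ψᵀ *ᵥ v with hw
  set u : Fin d → ℝ := R⁻¹ *ᵥ φ with hu
  set N : Matrix (Fin d) (Fin d') ℝ := R * (Mt - Mstar) with hN
  have hRinvT : R⁻¹ᵀ = R⁻¹ := by rw [Matrix.transpose_nonsing_inv, hRH]
  have hvecMul : φ ᵥ* R⁻¹ = u := by
    rw [← hRinvT, Matrix.vecMul_transpose]
  -- Claim 1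
  have hmain : φ ⬝ᵥ ((Mt - Mstar) *ᵥ w) = u ⬝ᵥ (N *ᵥ w) := by
    have h1 : R⁻¹ * N = Mt - Mstar := by
      rw [hN, ← Matrix.mul_assoc, Matrix.nonsing_inv_mul R hRdet, Matrix.one_mul]
    rw [← h1, ← Matrix.mulVec_mulVec, dotProduct_mulVec, hvecMul]
  -- Claim 2
  have hquad : φ ⬝ᵥ (A⁻¹ *ᵥ φ) = ∑ i, (u i) ^ 2 := by
    have hAinv : A⁻¹ = R⁻¹ * R⁻¹ := by rw [← hRR, Matrix.mul_inv_rev]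
    rw [hAinv, ← Matrix.mulVec_mulVec, dotProduct_mulVec, hvecMul, hu,
      dotProduct]
    exact Finset.sum_congr rfl fun i _ => (sq ((R⁻¹ *ᵥ φ) i)).symm
  -- Claim 3
  have hNfrob : frobNorm N ≤ 2 * Real.sqrt β := by
    have hsplit : N = R * (Mt - Mn) - R * (Mstar - Mn) := by
      rw [hN, ← Matrix.mul_sub, sub_sub_sub_cancel_right]
    calc frobNorm N ≤ frobNorm (R * (Mt - Mn)) + frobNorm (R * (Mstar - Mn)) := by
            rw [hsplit]; exact frob_sub_le _ _
      _ ≤ Real.sqrt β + Real.sqrt β := add_le_add hMt hMstar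
      _ = 2 * Real.sqrt β := by ring
  -- w bound
  have hwle : Real.sqrt (∑ j, (w j) ^ 2) ≤ Cψ * H :=
    (hΨ v).trans (by nlinarith [norm_nonneg v])
  -- put together
  have hub : 0 ≤ Real.sqrt (∑ i, (u i) ^ 2) := Real.sqrt_nonneg _
  calc φ ⬝ᵥ ((Mt - Mstar) *ᵥ w) = u ⬝ᵥ (N *ᵥ w) := hmain
    _ = ∑ i, u i * (N *ᵥ w) i := rfl
    _ ≤ Real.sqrt (∑ i, (u i) ^ 2) * Real.sqrt (∑ i, ((N *ᵥ w) i) ^ 2) :=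
        Real.sum_mul_le_sqrt_mul_sqrt _ _ _
    _ ≤ Real.sqrt (∑ i, (u i) ^ 2) * ((2 * Real.sqrt β) * (Cψ * H)) := by
        refine mul_le_mul_of_nonneg_left ?_ hub
        calc Real.sqrt (∑ i, ((N *ᵥ w) i) ^ 2)
            ≤ frobNorm N * Real.sqrt (∑ j, (w j) ^ 2) := mv_l2_le N w
          _ ≤ (2 * Real.sqrt β) * (Cψ * H) := by
              apply mul_le_mul hNfrob hwle (Real.sqrt_nonneg _)
              positivity
    _ = 2 * Cψ * H * Real.sqrt (β * (φ ⬝ᵥ (A⁻¹ *ᵥ φ))) := by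
        rw [hquad, Real.sqrt_mul hβ.le]
        ring
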